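/- Let V be a finite-dimensional real normed vector space and K ⊆ V a nonempty compact convex set. Let x₀, x₁ ∈ K and λ ∈ [0,1]. Then the optimal success probability in the discrimination task equals sup{ λ · f(x₀) + (1−λ) · (1 − f(x₁)) : f : V → ℝ affine with 0 ≤ f(x) ≤ 1 for all x ∈ K } = (1/2) · ( 1 + sup{ |λ · f(x₀) − (1−λ) · f(x₁)| : f : V → ℝ affine with |f(x)| ≤ 1 for all x ∈ K } ). -/
import Mathlib


/-- the optimal success probability for discriminating states `x₀, x₁ ∈ K`
with a priori probabilities `λ, 1−λ` equals `(1/2)(1 + ‖λ x₀ − (1−λ) x₁‖)`, with the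
norm expressed as a supremum over affine functions bounded by `1` in absolute value
on `K`. -/
theorem discrimination_success_probability
    {V : Type*} [NormedAddCommGroup V] [NormedSpace ℝ V] [FiniteDimensional ℝ V]
    (K : Set V) (hne : K.Nonempty) (hcomp : IsCompact K) (hconv : Convex ℝ K)
    (x₀ x₁ : V) (hx₀ : x₀ ∈ K) (hx₁ : x₁ ∈ K)
    (l : ℝ) (hl : l ∈ Set.Icc (0 : ℝ) 1) :
    sSup {r : ℝ | ∃ f : V →ᵃ[ℝ] ℝ, (∀ x ∈ K, 0 ≤ f x ∧ f x ≤ 1) ∧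
        r = l * f x₀ + (1 - l) * (1 - f x₁)} =
    (1 / 2) * (1 + sSup {r : ℝ | ∃ f : V →ᵃ[ℝ] ℝ, (∀ x ∈ K, |f x| ≤ 1) ∧
        r = |l * f x₀ - (1 - l) * f x₁|}) := by
  obtain ⟨hl0, hl1⟩ := hl
  set A : Set ℝ := {r : ℝ | ∃ f : V →ᵃ[ℝ] ℝ, (∀ x ∈ K, 0 ≤ f x ∧ f x ≤ 1) ∧
        r = l * f x₀ + (1 - l) * (1 - f x₁)} with hA
  set B : Set ℝ := {r : ℝ | ∃ f : V →ᵃ[ℝ] ℝ, (∀ x ∈ K, |f x| ≤ 1) ∧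
        r = |l * f x₀ - (1 - l) * f x₁|} with hB
  have hAne : A.Nonempty := ⟨1 - l, 0, fun x _ => by simp, by simp⟩
  have hBne : B.Nonempty := ⟨0, 0, fun x _ => by simp, by simp⟩
  have hAbdd : BddAbove A := by
    refine ⟨1, ?_⟩
    rintro r ⟨f, hf, rfl⟩
    obtain ⟨h00, h01⟩ := hf x₀ hx₀
    obtain ⟨h10, h11⟩ := hf x₁ hx₁
    nlinarith
  have hBbdd : BddAbove B := by
    refine ⟨1, ?_⟩
    rintro r ⟨g, hg, rfl⟩
    have h0 := hg x₀ hx₀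
    have h1 := hg x₁ hx₁
    have h0' := abs_le.mp h0
    have h1' := abs_le.mp h1
    rw [abs_le]
    constructor <;> nlinarith
  -- helper: for g with |g| ≤ 1 on K and t := l g x₀ - (1-l) g x₁ ≥ 0, 1/2(1+t) ∈ A
  have key : ∀ g : V →ᵃ[ℝ] ℝ, (∀ x ∈ K, |g x| ≤ 1) →
      (1 / 2) * (1 + (l * g x₀ - (1 - l) * g x₁)) ∈ A := by
    intro g hg
    refine ⟨(1 / 2 : ℝ) • (g + AffineMap.const ℝ V 1), fun x hx => ?_, ?_⟩
    · have := abs_le.mp (hg x hx)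
      simp only [AffineMap.coe_smul, AffineMap.coe_add, AffineMap.coe_const,
        Pi.smul_apply, Pi.add_apply, Function.const_apply, smul_eq_mul]
      constructor <;> linarith [this.1, this.2]
    · simp only [AffineMap.coe_smul, AffineMap.coe_add, AffineMap.coe_const,
        Pi.smul_apply, Pi.add_apply, Function.const_apply, smul_eq_mul]
      ring
  apply le_antisymm
  · apply csSup_le hAne
    rintro r ⟨f, hf, rfl⟩
    set g : V →ᵃ[ℝ] ℝ := (2 : ℝ) • f - AffineMap.const ℝ V 1 with hgdef
    have hgx : ∀ x, g x = 2 * f x - 1 := by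
      intro x
      simp [hgdef, AffineMap.coe_smul, AffineMap.coe_sub, AffineMap.coe_const]
    have hg : ∀ x ∈ K, |g x| ≤ 1 := by
      intro x hx
      obtain ⟨h0, h1⟩ := hf x hx
      rw [hgx, abs_le]
      constructor <;> linarith
    have hmem : |l * g x₀ - (1 - l) * g x₁| ∈ B := ⟨g, hg, rfl⟩
    have hle := le_csSup hBbdd hmem
    have habs : l * g x₀ - (1 - l) * g x₁ ≤ |l * g x₀ - (1 - l) * g x₁| :=
      le_abs_self _
    rw [hgx, hgx] at hle habs
    nlinarith [hle, habs]
  · have hsup : sSup B ≤ 2 * sSup A - 1 := by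
      apply csSup_le hBne
      rintro r ⟨g, hg, rfl⟩
      by_cases ht : 0 ≤ l * g x₀ - (1 - l) * g x₁
      · have := le_csSup hAbdd (key g hg)
        rw [abs_of_nonneg ht]
        linarith
      · have hg' : ∀ x ∈ K, |(-g) x| ≤ 1 := by
          intro x hx
          simpa using hg x hx
        have hmem := key (-g) hg'
        have hval : ∀ x, (-g) x = -(g x) := fun x => by simp
        rw [hval, hval] at hmem
        have := le_csSup hAbdd hmem
        rw [abs_of_neg (not_le.mp ht)]
        linarith
    linarith [le_csSup hAbdd (key 0 (fun x _ => by simp)),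
      csSup_le hBne (fun r hr => le_csSup hBbdd hr)]
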